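/- Suppose the modular program signature is structurally valid and I is a valid selection. Then the restricted signature Limit(I) is structurally valid: its module dependency graph has no directed cycle, and every hole h has impls_{Limit(I)}(h) ≠ ∅. -/

import Mathlib

/-- `pars I` is the image of `par` on the finset `I` of implementations. -/
def pars {ι κ : Type*} [DecidableEq κ] (par : ι → κ) (I : Finset ι) : Finset κ :=
  I.image par

/-- `holesOf I` is the union of the holes referenced by the implementations in `I`. -/
def holesOf {ι κ : Type*} [DecidableEq ι] [DecidableEq κ]
    (holes : ι → Finset κ) (I : Finset ι) : Finset κ :=
  I.biUnion holes

/-- `implsH h` is the finset of implementations of the hole `h`. -/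
def implsH {ι κ : Type*} [Fintype ι] [DecidableEq κ] (par : ι → κ) (h : κ) : Finset ι :=
  Finset.univ.filter (fun i => par i = h)

/-- `implsHs H` is the finset of implementations of holes in `H`. -/
def implsHs {ι κ : Type*} [Fintype ι] [DecidableEq κ] (par : ι → κ) (H : Finset κ) : Finset ι :=
  Finset.univ.filter (fun i => par i ∈ H)

/-- `siblings I₁ I₂` is the finset of pairs of distinct implementations across `I₁`, `I₂`
sharing a parent hole. -/
def siblings {ι κ : Type*} [DecidableEq ι] [DecidableEq κ]
    (par : ι → κ) (I₁ I₂ : Finset ι) : Finset (ι × ι) :=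
  (I₁ ×ˢ I₂).filter (fun p => p.1 ≠ p.2 ∧ par p.1 = par p.2)

/-- A finset `I` of implementations is a valid selection. -/
def ValidSelection {ι κ : Type*} [DecidableEq ι] [DecidableEq κ]
    (par : ι → κ) (holes : ι → Finset κ) (baseHoles : Finset κ) (I : Finset ι) : Prop :=
  pars par I = baseHoles ∪ holesOf holes I ∧ siblings par I I = ∅

/-- The module dependency graph: vertices are implementations plus one base node (`none`);
there is an edge `i₁ → i₂` whenever `par i₂ ∈ holes i₁`, and an edge `base → i₂`
whenever `par i₂ ∈ baseHoles`. -/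
def MDG {ι κ : Type*} (par : ι → κ) (holes : ι → Finset κ) (baseHoles : Finset κ) :
    Option ι → Option ι → Prop
  | some i₁, some i₂ => par i₂ ∈ holes i₁
  | none, some i₂ => par i₂ ∈ baseHoles
  | _, none => False

/-- Structural validity of a modular program signature: the module dependency graph has
no directed cycle, and every hole has at least one implementation. -/
def StructValid {ι κ : Type*} [Fintype ι] [DecidableEq κ]
    (par : ι → κ) (holes : ι → Finset κ) (baseHoles : Finset κ) : Prop :=
  Irreflexive (Relation.TransGen (MDG par holes baseHoles)) ∧
  ∀ h : κ, (implsH par h).Nonempty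

/-- The hole dependency graph `G_Dep`: an edge `h₁ → h₂` iff some implementation of `h₁`
references `h₂`. -/
def GDep {ι κ : Type*} (par : ι → κ) (holes : ι → Finset κ) (h₁ h₂ : κ) : Prop :=
  ∃ i : ι, par i = h₁ ∧ h₂ ∈ holes i

/-- `Hs 1, …, Hs n` is an enumeration of all holes in a topological order of the hole
dependency graph. -/
def TopoEnum {ι κ : Type*} (par : ι → κ) (holes : ι → Finset κ) (n : ℕ) (Hs : ℕ → κ) : Prop :=
  (∀ h : κ, ∃ j, 1 ≤ j ∧ j ≤ n ∧ Hs j = h) ∧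
  (∀ j k, 1 ≤ j → j ≤ n → 1 ≤ k → k ≤ n → Hs j = Hs k → j = k) ∧
  (∀ j k, 1 ≤ j → j ≤ n → 1 ≤ k → k ≤ n → GDep par holes (Hs j) (Hs k) → j < k)

/-- `Hpre Hs j` is the finset `{H₁, …, H_j}` of the first `j` holes of the enumeration. -/
def Hpre {κ : Type*} [DecidableEq κ] (Hs : ℕ → κ) (j : ℕ) : Finset κ :=
  (Finset.Icc 1 j).image Hs

/-- The implementations of the restricted signature `Limit(I)`:
implementations `i` with `par i ∉ pars I` or `i ∈ I`. -/
def LimitImpls {ι κ : Type*} [Fintype ι] [DecidableEq ι] [DecidableEq κ]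
    (par : ι → κ) (I : Finset ι) : Finset ι :=
  Finset.univ.filter (fun i => par i ∉ pars par I ∨ i ∈ I)

/-- The module dependency graph of the signature restricted to the allowed
implementations `A`. -/
def MDGRestr {ι κ : Type*} [DecidableEq ι]
    (par : ι → κ) (holes : ι → Finset κ) (baseHoles : Finset κ) (A : Finset ι) :
    Option ι → Option ι → Prop
  | some i₁, some i₂ => i₁ ∈ A ∧ i₂ ∈ A ∧ par i₂ ∈ holes i₁
  | none, some i₂ => i₂ ∈ A ∧ par i₂ ∈ baseHoles
  | _, none => False

/-- `Limit(I)` is structurally valid: if the signature is structurally valid and `I` is a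
valid selection, the restricted signature's module dependency graph has no directed cycle
and every hole still has an implementation in `Limit(I)`. -/
theorem limit_structValid {ι κ : Type*}
    [Fintype ι] [DecidableEq ι] [Fintype κ] [DecidableEq κ]
    (par : ι → κ) (holes : ι → Finset κ) (baseHoles : Finset κ)
    (hvalid : StructValid par holes baseHoles)
    (I : Finset ι) (hI : ValidSelection par holes baseHoles I) :
    Irreflexive (Relation.TransGen (MDGRestr par holes baseHoles (LimitImpls par I))) ∧
    ∀ h : κ, (implsH par h ∩ LimitImpls par I).Nonempty := by
  obtain ⟨hirr, himpls⟩ := hvalid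
  constructor
  · have hsub : ∀ a b, MDGRestr par holes baseHoles (LimitImpls par I) a b →
        MDG par holes baseHoles a b := by
      rintro (_|i₁) (_|i₂) hab <;> simp [MDGRestr, MDG] at hab ⊢ <;> tauto
    intro a ha
    exact hirr a (Relation.TransGen.mono hsub a a ha)
  · intro h
    by_cases hh : h ∈ pars par I
    · obtain ⟨i, hi, hpi⟩ := Finset.mem_image.mp hh
      exact ⟨i, Finset.mem_inter.mpr ⟨Finset.mem_filter.mpr ⟨Finset.mem_univ _, hpi⟩,
        Finset.mem_filter.mpr ⟨Finset.mem_univ _, Or.inr hi⟩⟩⟩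
    · obtain ⟨i, hi⟩ := himpls h
      have hpi : par i = h := (Finset.mem_filter.mp hi).2
      exact ⟨i, Finset.mem_inter.mpr ⟨hi,
        Finset.mem_filter.mpr ⟨Finset.mem_univ _, Or.inl (hpi ▸ hh)⟩⟩⟩
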